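/- For single-integrator dynamics, the reverse inclusion also holds: any point x with ‖x − x_s‖₂ + ‖x − x_g‖₂ ≤ u_max·T lies in Ω(T) = ⋃_{0≤t≤T} F[0,t] ∩ R_b[t,T], where F[0,t] is the closed ball of radius u_max·t about x_s and R_b[t,T] = ⋃_{t≤τ≤T} {y : ‖y − x_g‖₂ ≤ u_max(τ−t)}. Hence Ω(T) equals the prolate hyper-spheroid {x : ‖x − x_s‖₂ + ‖x − x_g‖₂ ≤ u_max·T}. -/

import Mathlib

open Set Metric

/-- For single-integrator dynamics, every point of the `L₂`-Informed Set lies in the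
Time-Informed Set; hence `Ω(T)` equals the prolate hyper-spheroid
`{x : ‖x−x_s‖ + ‖x−x_g‖ ≤ u_max·T}`. -/
theorem singleIntegrator_TIS_eq_L2informed {n : ℕ}
    (xs xg : EuclideanSpace ℝ (Fin n)) (umax T : ℝ) (hu : 0 < umax) (hT : 0 < T)
    (hreach : dist xs xg ≤ umax * T) :
    ({x | dist x xs + dist x xg ≤ umax * T} ⊆
        ⋃ t ∈ Icc (0:ℝ) T,
          closedBall xs (umax * t) ∩ ⋃ τ ∈ Icc t T, closedBall xg (umax * (τ - t))) ∧
      (⋃ t ∈ Icc (0:ℝ) T,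
          closedBall xs (umax * t) ∩ ⋃ τ ∈ Icc t T, closedBall xg (umax * (τ - t))) =
        {x | dist x xs + dist x xg ≤ umax * T} := by
  have hsub : ({x | dist x xs + dist x xg ≤ umax * T} ⊆
      ⋃ t ∈ Icc (0:ℝ) T,
        closedBall xs (umax * t) ∩ ⋃ τ ∈ Icc t T, closedBall xg (umax * (τ - t))) := by
    intro x hx
    simp only [mem_setOf_eq] at hx
    have hds : 0 ≤ dist x xs := dist_nonneg
    have hdg : 0 ≤ dist x xg := dist_nonneg
    set t := dist x xs / umax with ht
    set τ := t + dist x xg / umax with hτ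
    have ht0 : 0 ≤ t := div_nonneg hds hu.le
    have hτT : τ ≤ T := by
      rw [hτ, ht, ← add_div, div_le_iff₀ hu]
      linarith [hx]
    have htT : t ≤ T := le_trans (le_add_of_nonneg_right (div_nonneg hdg hu.le)) hτT
    refine mem_iUnion₂.2 ⟨t, ⟨ht0, htT⟩, ?_, ?_⟩
    · rw [mem_closedBall, ht, mul_div_cancel₀ _ hu.ne']
    · refine mem_iUnion₂.2 ⟨τ, ⟨le_add_of_nonneg_right (div_nonneg hdg hu.le), hτT⟩, ?_⟩
      rw [mem_closedBall, hτ]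
      rw [add_sub_cancel_left, mul_div_cancel₀ _ hu.ne']
  refine ⟨hsub, subset_antisymm ?_ hsub⟩
  intro x hx
  simp only [mem_iUnion₂, mem_inter_iff, mem_closedBall] at hx
  obtain ⟨t, ⟨ht0, htT⟩, h1, τ, ⟨hτt, hτT⟩, h2⟩ := hx
  simp only [mem_setOf_eq]
  have : umax * t + umax * (τ - t) ≤ umax * T := by nlinarith
  linarith
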